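/- Let 𝓛 be a nonempty convex subset of a Coxeter group W, let u ∈ W, let i ∈ I, and let β be a transmitting root of the stratum Str(Sep(u)). If B(uβ, α_i) < 0, then τ_i(u) = s_i u. -/
import Mathlib


open scoped Classical

noncomputable section

namespace BKBilliards

variable {I : Type*} [Fintype I] [DecidableEq I]
variable {M : CoxeterMatrix I} {W : Type*} [Group W]

/-- The simple root indexed by `i`, i.e. the `i`-th standard basis vector of `ℝ^I`. -/
def sroot (i : I) : I → ℝ := Pi.single i 1

/-- The data `(ρ, B)` constitutes the standard geometric representation of the Coxeter
system `cs`, together with its induced symmetric bilinear form (with `μ = 1` on all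
pairs whose Coxeter matrix entry is `∞`, encoded as `0`). -/
structure IsGeometric (cs : CoxeterSystem M W) (ρ : Representation ℝ W (I → ℝ))
    (B : LinearMap.BilinForm ℝ (I → ℝ)) : Prop where
  /-- `B(αᵢ, αᵢ') = -cos (π / m i i')` when `m i i' ≠ ∞`. -/
  form_apply_of_ne_zero : ∀ i i' : I, M i i' ≠ 0 →
    B (sroot i) (sroot i') = - Real.cos (Real.pi / (M i i' : ℝ))
  /-- `B(αᵢ, αᵢ') = -1` when `m i i' = ∞` (encoded as `0`). -/
  form_apply_of_eq_zero : ∀ i i' : I, M i i' = 0 → B (sroot i) (sroot i') = -1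
  /-- Each simple reflection acts by the reflection formula. -/
  simple_apply : ∀ (i : I) (v : I → ℝ), ρ (cs.simple i) v = v - (2 * B v (sroot i)) • sroot i

variable (ρ : Representation ℝ W (I → ℝ))

/-- The root system `Φ = {w αᵢ : w ∈ W, i ∈ I}`. -/
def Phi : Set (I → ℝ) := {v | ∃ (w : W) (i : I), v = ρ w (sroot i)}

/-- The half-space `H_β⁺ = {w ∈ W : w β ∈ Φ⁺}`: for a root `β`, membership amounts to
`w β` being a nonnegative combination of the simple roots. -/
def Hplus (β : I → ℝ) : Set W := {w : W | 0 ≤ ρ w β}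

/-- `R(𝓛) = {β ∈ Φ : 𝓛 ⊆ H_β⁺}`. -/
def RL (L : Set W) : Set (I → ℝ) := {β | β ∈ Phi ρ ∧ ∀ w ∈ L, w ∈ Hplus ρ β}

/-- `𝓛` is convex if it equals the intersection of all half-spaces containing it. -/
def IsConvex (L : Set W) : Prop := ∀ u : W, (∀ β ∈ RL ρ L, u ∈ Hplus ρ β) → u ∈ L

/-- The set of separators of `u`: `Sep(u) = {β ∈ R(𝓛) : u β ∈ Φ⁻}`. -/
def Sep (L : Set W) (u : W) : Set (I → ℝ) := {β | β ∈ RL ρ L ∧ ρ u β ≤ 0}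

variable (cs : CoxeterSystem M W)

/-- The noninvertible Bender–Knuth toggle `τᵢ` associated to the convex set `𝓛`. -/
def toggle (L : Set W) (i : I) (u : W) : W :=
  if ρ u⁻¹ (sroot i) ∈ RL ρ L then u else cs.simple i * u

/-- For a word `𝗐 = i_M ⋯ i_1` (a list whose head is `i_M`), the composition
`τ_𝗐 = τ_{i_M} ⋯ τ_{i_1}`. -/
def toggleWord (L : Set W) (l : List I) (u : W) : W :=
  l.foldr (fun i v => toggle ρ cs L i v) u

/-- `β` dominates `β'` if `H_β⁺ ⊇ H_{β'}⁺`. -/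
def Dominates (β β' : I → ℝ) : Prop := Hplus ρ β' ⊆ Hplus ρ β

/-- A small root: a positive root dominating no positive root other than itself. -/
def IsSmall (β : I → ℝ) : Prop :=
  β ∈ Phi ρ ∧ 0 ≤ β ∧ ∀ β', β' ∈ Phi ρ → 0 ≤ β' → Dominates ρ β β' → β' = β

/-- `β` is a transmitting root of the stratum `Str(R)`:
`β ∈ R(𝓛)` and `β = -w⁻¹ αᵢ` for some `w` with `Sep(w) = R` and some `i ∈ I`. -/
def IsTransmitting (L : Set W) (R : Set (I → ℝ)) (β : I → ℝ) : Prop :=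
  β ∈ RL ρ L ∧ ∃ (w : W) (i : I), Sep ρ L w = R ∧ β = - ρ w⁻¹ (sroot i)

/-! ### Auxiliary lemmas

We develop the basic theory of the geometric representation: symmetry and
`W`-invariance of the bilinear form `B`, the analysis of the action of alternating
words in rank-two (dihedral) subsystems, and the fundamental dichotomy that every
root is a nonnegative or nonpositive combination of simple roots. -/

variable {cs : CoxeterSystem M W} {ρ : Representation ℝ W (I → ℝ)}
variable {B : LinearMap.BilinForm ℝ (I → ℝ)}

set_option linter.unusedSectionVars false

lemma sroot_self (i : I) : sroot (I := I) i i = 1 := Pi.single_eq_same i 1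
lemma sroot_ne {i k : I} (h : k ≠ i) : sroot (I := I) i k = 0 := Pi.single_eq_of_ne h 1
lemma sroot_nonneg (i : I) : 0 ≤ sroot (I := I) i := by
  intro k
  rcases eq_or_ne k i with rfl | h
  · simp [sroot_self]
  · simp [sroot_ne h]

lemma pi_decomp (x : I → ℝ) : x = ∑ i, x i • sroot (I := I) i := by
  funext k
  simp only [Finset.sum_apply, Pi.smul_apply, sroot, Pi.single_apply, smul_eq_mul]
  simp [Finset.sum_ite_eq']

section geom
variable (hg : IsGeometric cs ρ B)
include hg

lemma B_diag (i : I) : B (sroot i) (sroot i) = 1 := by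
  have h := hg.form_apply_of_ne_zero i i (by simp [M.diagonal])
  rw [h, M.diagonal]
  simp

lemma B_basis_symm (i j : I) : B (sroot (I:=I) i) (sroot j) = B (sroot j) (sroot i) := by
  rcases eq_or_ne (M i j) 0 with h | h
  · rw [hg.form_apply_of_eq_zero i j h, hg.form_apply_of_eq_zero j i (by rwa [M.symmetric j i])]
  · rw [hg.form_apply_of_ne_zero i j h, hg.form_apply_of_ne_zero j i (by rwa [M.symmetric j i]),
      M.symmetric j i]

lemma B_offdiag_nonpos {i j : I} (h : i ≠ j) : B (sroot (I:=I) i) (sroot j) ≤ 0 := by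
  rcases eq_or_ne (M i j) 0 with h0 | h0
  · rw [hg.form_apply_of_eq_zero i j h0]; norm_num
  · rw [hg.form_apply_of_ne_zero i j h0]
    have h1 : M i j ≠ 1 := M.off_diagonal i j h
    have h2 : 2 ≤ M i j := by omega
    have h2' : (2:ℝ) ≤ (M i j : ℝ) := by exact_mod_cast h2
    have hpi := Real.pi_pos
    have : (0:ℝ) ≤ Real.cos (Real.pi / (M i j : ℝ)) := by
      apply Real.cos_nonneg_of_mem_Icc
      constructor
      · have : (0:ℝ) ≤ Real.pi / (M i j : ℝ) := by positivity
        linarith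
      · rw [div_le_iff₀ (by linarith)]
        nlinarith
    linarith

lemma B_symm (x y : I → ℝ) : B x y = B y x := by
  rw [pi_decomp (I := I) x, pi_decomp (I := I) y]
  simp only [map_sum, LinearMap.BilinForm.sum_left, LinearMap.BilinForm.sum_right,
    LinearMap.BilinForm.smul_left, LinearMap.BilinForm.smul_right, LinearMap.coe_sum,
    Finset.sum_apply, LinearMap.smul_apply, smul_eq_mul]
  rw [Finset.sum_comm]
  congr 1; funext i; congr 1; funext j
  rw [B_basis_symm hg i j]; ring

lemma B_simple_inv (i : I) (x y : I → ℝ) :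
    B (ρ (cs.simple i) x) (ρ (cs.simple i) y) = B x y := by
  rw [hg.simple_apply, hg.simple_apply]
  simp only [map_sub, map_smul, LinearMap.sub_apply, LinearMap.smul_apply,
    LinearMap.BilinForm.smul_left, LinearMap.BilinForm.smul_right, smul_eq_mul]
  rw [B_diag hg, B_symm hg y (sroot i)]
  ring

lemma B_inv (g : W) : ∀ x y : I → ℝ, B (ρ g x) (ρ g y) = B x y := by
  induction g using cs.simple_induction with
  | simple i => exact B_simple_inv hg i
  | one => simp
  | mul w₁ w₂ h₁ h₂ =>
      intro x y
      rw [map_mul]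
      have e : ∀ z : I → ℝ, (ρ w₁ * ρ w₂) z = ρ w₁ (ρ w₂ z) := fun z => rfl
      rw [e, e, h₁ _ _, h₂]

end geom

lemma rho_mul_apply (g h : W) (x : I → ℝ) : ρ (g * h) x = ρ g (ρ h x) := by
  rw [map_mul]; rfl

lemma rho_inv_apply (g : W) (x : I → ℝ) : ρ g (ρ g⁻¹ x) = x := by
  rw [← rho_mul_apply, mul_inv_cancel]; simp

lemma rho_inv_apply' (g : W) (x : I → ℝ) : ρ g⁻¹ (ρ g x) = x := by
  rw [← rho_mul_apply, inv_mul_cancel]; simp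

section geom2
variable (hg : IsGeometric cs ρ B)
include hg

lemma B_root_self (g : W) (i : I) : B (ρ g (sroot i)) (ρ g (sroot i)) = 1 := by
  rw [B_inv hg, B_diag hg]

lemma simple_on_self (i : I) : ρ (cs.simple i) (sroot i) = - sroot (I:=I) i := by
  rw [hg.simple_apply, B_diag hg]
  funext k; simp; ring

lemma B_comb (a b : ℝ) (i j c : I) :
    B (a • sroot i + b • sroot j) (sroot c)
      = a * B (sroot i) (sroot c) + b * B (sroot j) (sroot c) := by
  simp [LinearMap.BilinForm.add_left, LinearMap.BilinForm.smul_left]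

lemma B_offdiag (hij : i ≠ j) :
    B (sroot (I:=I) i) (sroot j) = B (sroot j) (sroot i) := B_basis_symm hg i j

/-- Closed form for the coefficients of the action of alternating words in the
infinite dihedral case. -/
lemma alt_coeffs_zero {i j : I} (hij : i ≠ j) (hm : M i j = 0) : ∀ k : ℕ,
    ρ (cs.wordProd (CoxeterSystem.alternatingWord i j k)) (sroot i)
      = (if Even k then (k:ℝ)+1 else (k:ℝ)) • sroot i
        + (if Even k then (k:ℝ) else (k:ℝ)+1) • sroot j := by
  have hmji : M j i = 0 := by rwa [M.symmetric j i]
  have hBij : B (sroot (I:=I) i) (sroot j) = -1 := hg.form_apply_of_eq_zero i j hm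
  have hBji : B (sroot (I:=I) j) (sroot i) = -1 := hg.form_apply_of_eq_zero j i hmji
  intro k
  induction k with
  | zero => simp [CoxeterSystem.alternatingWord]
  | succ k ih =>
      rw [CoxeterSystem.alternatingWord_succ', cs.wordProd_cons, rho_mul_apply, ih]
      rcases Nat.even_or_odd k with he | ho
      · have hne : ¬ Even (k+1) := by simp [Nat.even_add_one, he]
        simp only [if_pos he, if_neg hne]
        rw [hg.simple_apply, B_comb hg, hBij, B_diag hg]
        funext x
        simp only [Pi.add_apply, Pi.sub_apply, Pi.smul_apply, smul_eq_mul, Nat.cast_add,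
          Nat.cast_one]
        ring
      · have hne : ¬ Even k := Nat.not_even_iff_odd.2 ho
        have he1 : Even (k+1) := Nat.even_add_one.2 hne
        simp only [if_neg hne, if_pos he1]
        rw [hg.simple_apply, B_comb hg, hBji, B_diag hg]
        funext x
        simp only [Pi.add_apply, Pi.sub_apply, Pi.smul_apply, smul_eq_mul, Nat.cast_add,
          Nat.cast_one]
        ring

/-- Closed form in the finite case, with `θ = π / m`. -/
lemma alt_coeffs_pos {i j : I} (hij : i ≠ j) (hm : M i j ≠ 0) : ∀ k : ℕ,
    ρ (cs.wordProd (CoxeterSystem.alternatingWord i j k)) (sroot i)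
      = ((if Even k then Real.sin (((k:ℝ)+1) * (Real.pi / (M i j : ℝ)))
            else Real.sin ((k:ℝ) * (Real.pi / (M i j : ℝ)))) / Real.sin (Real.pi / (M i j : ℝ))) • sroot i
        + ((if Even k then Real.sin ((k:ℝ) * (Real.pi / (M i j : ℝ)))
            else Real.sin (((k:ℝ)+1) * (Real.pi / (M i j : ℝ)))) / Real.sin (Real.pi / (M i j : ℝ))) • sroot j := by
  have hmji : M j i = M i j := M.symmetric j i
  set θ : ℝ := Real.pi / (M i j : ℝ) with hθ
  have h1 : M i j ≠ 1 := M.off_diagonal i j hij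
  have h2 : 2 ≤ M i j := by omega
  have h2' : (2:ℝ) ≤ (M i j : ℝ) := by exact_mod_cast h2
  have hpi := Real.pi_pos
  have hθpos : 0 < θ := by rw [hθ]; positivity
  have hθlt : θ < Real.pi := by
    rw [hθ, div_lt_iff₀ (by linarith)]
    nlinarith
  have hss : 0 < Real.sin θ := Real.sin_pos_of_pos_of_lt_pi hθpos hθlt
  have hBij : B (sroot (I:=I) i) (sroot j) = - Real.cos θ := hg.form_apply_of_ne_zero i j hm
  have hBji : B (sroot (I:=I) j) (sroot i) = - Real.cos θ := by
    rw [hg.form_apply_of_ne_zero j i (by rwa [hmji]), hmji]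
  intro k
  induction k with
  | zero => simp [CoxeterSystem.alternatingWord, div_self (ne_of_gt hss)]
  | succ k ih =>
      rw [CoxeterSystem.alternatingWord_succ', cs.wordProd_cons, rho_mul_apply, ih]
      have hrec : Real.sin (((k:ℝ)+2) * θ)
          = 2 * Real.cos θ * Real.sin (((k:ℝ)+1) * θ) - Real.sin ((k:ℝ) * θ) := by
        have e1 : ((k:ℝ)+2) * θ = ((k:ℝ)+1) * θ + θ := by ring
        have e2 : (k:ℝ) * θ = ((k:ℝ)+1) * θ - θ := by ring
        rw [e1, e2, Real.sin_add, Real.sin_sub]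
        ring
      rcases Nat.even_or_odd k with he | ho
      · have hne : ¬ Even (k+1) := by simp [Nat.even_add_one, he]
        simp only [if_pos he, if_neg hne]
        rw [hg.simple_apply, B_comb hg, hBij, B_diag hg]
        have e3 : ((k:ℝ)+1+1) = ((k:ℝ)+2) := by push_cast; ring
        simp only [Nat.cast_add, Nat.cast_one, e3, hrec]
        funext x
        simp only [Pi.add_apply, Pi.sub_apply, Pi.smul_apply, smul_eq_mul]
        have hssne : Real.sin θ ≠ 0 := ne_of_gt hss
        field_simp
        ring
      · have hne : ¬ Even k := Nat.not_even_iff_odd.2 ho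
        have he1 : Even (k+1) := Nat.even_add_one.2 hne
        simp only [if_neg hne, if_pos he1]
        rw [hg.simple_apply, B_comb hg, hBji, B_diag hg]
        have e3 : ((k:ℝ)+1+1) = ((k:ℝ)+2) := by push_cast; ring
        simp only [Nat.cast_add, Nat.cast_one, e3, hrec]
        funext x
        simp only [Pi.add_apply, Pi.sub_apply, Pi.smul_apply, smul_eq_mul]
        have hssne : Real.sin θ ≠ 0 := ne_of_gt hss
        field_simp
        ring

/-- In either case, for `k` within range, the alternating word sends `αᵢ` to a nonnegative
combination of `αᵢ` and `αⱼ`. -/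
lemma alt_coeffs {i j : I} (hij : i ≠ j) (k : ℕ) (hk : M i j = 0 ∨ k < M i j) :
    ∃ a b : ℝ, 0 ≤ a ∧ 0 ≤ b ∧
      ρ (cs.wordProd (CoxeterSystem.alternatingWord i j k)) (sroot i)
        = a • sroot i + b • sroot j := by
  rcases hk with hm | hk
  · refine ⟨_, _, ?_, ?_, alt_coeffs_zero hg hij hm k⟩ <;> (split <;> positivity)
  · have hm : M i j ≠ 0 := by omega
    have h1 : M i j ≠ 1 := M.off_diagonal i j hij
    have hpi := Real.pi_pos
    have hmR : (0:ℝ) < (M i j : ℝ) := by exact_mod_cast Nat.pos_of_ne_zero hm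
    have hθeq : ∀ t : ℕ, t ≤ M i j → 0 ≤ Real.sin ((t:ℝ) * (Real.pi / (M i j : ℝ))) := by
      intro t ht
      apply Real.sin_nonneg_of_nonneg_of_le_pi
      · positivity
      · rw [mul_div_assoc']
        rw [div_le_iff₀ hmR]
        have : (t:ℝ) ≤ (M i j : ℝ) := by exact_mod_cast ht
        nlinarith
    have hss : 0 < Real.sin (Real.pi / (M i j : ℝ)) := by
      apply Real.sin_pos_of_pos_of_lt_pi
      · positivity
      · rw [div_lt_iff₀ hmR]
        have : (2:ℝ) ≤ (M i j : ℝ) := by exact_mod_cast (by omega : 2 ≤ M i j)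
        nlinarith
    refine ⟨_, _, ?_, ?_, alt_coeffs_pos hg hij hm k⟩ <;>
      · apply div_nonneg _ (le_of_lt hss)
        split
        · first
            | · have := hθeq (k+1) (by omega); push_cast at this ⊢; linarith
            | · have := hθeq k (by omega); linarith
        · first
            | · have := hθeq k (by omega); linarith
            | · have := hθeq (k+1) (by omega); push_cast at this ⊢; linarith
  
lemma rho_pos_of_ascent : ∀ (n : ℕ) (w : W) (i : I),
    cs.length w = n → cs.length w < cs.length (w * cs.simple i) → 0 ≤ ρ w (sroot i) := by
  intro n
  induction n using Nat.strong_induction_on with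
  | _ n IH =>
    intro w i hn hasc
    rcases eq_or_ne w 1 with rfl | hw
    · simpa using sroot_nonneg i
    obtain ⟨j, hj⟩ := cs.exists_rightDescent_of_ne_one hw
    have hj' : cs.length (w * cs.simple j) < cs.length w := hj
    have hij : i ≠ j := by
      rintro rfl
      omega
    set f : ℕ → W := fun t => w * (cs.wordProd (CoxeterSystem.alternatingWord i j t))⁻¹ with hf
    have hf0 : f 0 = w := by simp [hf, CoxeterSystem.alternatingWord]
    have hfstep : ∀ t, f (t+1) = f t * cs.simple (if Even t then j else i) := by
      intro t
      simp only [hf]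
      rw [CoxeterSystem.alternatingWord_succ', cs.wordProd_cons, mul_inv_rev, cs.inv_simple,
        ← mul_assoc]
    have hstop : ∃ t, ¬ (cs.length (f (t+1)) < cs.length (f t)) := by
      by_contra hall
      push_neg at hall
      have hdec : ∀ t, cs.length (f t) + t ≤ cs.length w := by
        intro t
        induction t with
        | zero => simp [hf0]
        | succ t iht => have := hall t; omega
      have := hdec (cs.length w + 1); omega
    obtain ⟨k, hkspec, hmin⟩ : ∃ k, ¬ (cs.length (f (k+1)) < cs.length (f k)) ∧
        ∀ t, t < k → cs.length (f (t+1)) < cs.length (f t) :=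
      ⟨Nat.find hstop, Nat.find_spec hstop, fun t ht => by
        have := Nat.find_min hstop ht; tauto⟩
    have hkpos : 0 < k := by
      rcases Nat.eq_zero_or_pos k with h0 | h0
      · exfalso
        apply hkspec
        rw [h0]
        have : f 1 = w * cs.simple j := by rw [hfstep 0, hf0]; norm_num
        rw [this, hf0]
        · exact hj'
      · exact h0
    have hlen : ∀ t, t ≤ k → cs.length (f t) + t = cs.length w := by
      intro t
      induction t with
      | zero => simp [hf0]
      | succ t iht =>
          intro ht
          have h1 : cs.length (f t) + t = cs.length w := iht (by omega)
          have h2 := hmin t (by omega)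
          rcases cs.length_mul_simple (f t) (if Even t then j else i) with h3 | h3 <;>
            rw [← hfstep t] at h3 <;> omega
    obtain ⟨t0, rfl⟩ : ∃ t0, k = t0 + 1 := ⟨k - 1, by omega⟩
    have hasc1 : cs.length (f (t0+1)) <
        cs.length (f (t0+1) * cs.simple (if Even (t0+1) then j else i)) := by
      rw [← hfstep (t0+1)]
      have := cs.length_mul_simple_ne (f (t0+1)) (if Even (t0+1) then j else i)
      rw [← hfstep (t0+1)] at this
      omega
    have hasc2 : cs.length (f (t0+1)) <
        cs.length (f (t0+1) * cs.simple (if Even t0 then j else i)) := by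
      have hcancel : f (t0+1) * cs.simple (if Even t0 then j else i) = f t0 := by
        rw [hfstep t0]
        exact cs.simple_mul_simple_cancel_right _
      rw [hcancel]
      have e1 := hlen t0 (by omega)
      have e2 := hlen (t0+1) (by omega)
      omega
    have hvi : cs.length (f (t0+1)) < cs.length (f (t0+1) * cs.simple i) := by
      rcases Nat.even_or_odd t0 with he | ho
      · have : ¬ Even (t0 + 1) := by simp [Nat.even_add_one, he]
        rwa [if_neg this] at hasc1
      · have : ¬ Even t0 := Nat.not_even_iff_odd.2 ho
        rwa [if_neg this] at hasc2
    have hvj : cs.length (f (t0+1)) < cs.length (f (t0+1) * cs.simple j) := by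
      rcases Nat.even_or_odd t0 with he | ho
      · rwa [if_pos he] at hasc2
      · have : Even (t0 + 1) := Nat.even_add_one.2 (Nat.not_even_iff_odd.2 ho)
        rwa [if_pos this] at hasc1
    have hlk : cs.length (f (t0+1)) + (t0+1) = n := by
      have := hlen (t0+1) (le_refl _); omega
    have Pi' : 0 ≤ ρ (f (t0+1)) (sroot i) :=
      IH (cs.length (f (t0+1))) (by omega) (f (t0+1)) i rfl hvi
    have Pj' : 0 ≤ ρ (f (t0+1)) (sroot j) :=
      IH (cs.length (f (t0+1))) (by omega) (f (t0+1)) j rfl hvj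
    have hbound : M i j = 0 ∨ (t0+1) < M i j := by
      by_contra hcon
      push_neg at hcon
      obtain ⟨hm0, hmk⟩ := hcon
      set m := M i j with hm
      have hmpos : 1 ≤ m := Nat.pos_of_ne_zero hm0
      have hbraid : cs.wordProd (CoxeterSystem.alternatingWord i j m)
          = cs.wordProd (CoxeterSystem.alternatingWord i j (m - 1)) * cs.simple i := by
        have h1 := cs.wordProd_braidWord_eq i j
        unfold CoxeterSystem.braidWord at h1
        rw [M.symmetric j i, ← hm] at h1
        rw [h1]
        have h2 : CoxeterSystem.alternatingWord j i m
            = (CoxeterSystem.alternatingWord i j (m-1)).concat i := by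
          conv_lhs => rw [show m = (m-1) + 1 by omega]
          rw [CoxeterSystem.alternatingWord_succ]
        rw [h2, cs.wordProd_concat]
      have hfm : f m * cs.wordProd (CoxeterSystem.alternatingWord i j (m-1)) = w * cs.simple i := by
        simp only [hf]
        rw [hbraid, mul_inv_rev, cs.inv_simple]
        group
      have hlfm := hlen m (by omega)
      have hle : cs.length (w * cs.simple i) ≤ cs.length (f m) + (m - 1) := by
        rw [← hfm]
        calc cs.length (f m * cs.wordProd (CoxeterSystem.alternatingWord i j (m-1)))
            ≤ cs.length (f m) + cs.length (cs.wordProd (CoxeterSystem.alternatingWord i j (m-1))) :=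
              cs.length_mul_le _ _
          _ ≤ cs.length (f m) + (m - 1) := by
              have := cs.length_wordProd_le (CoxeterSystem.alternatingWord i j (m-1))
              rw [CoxeterSystem.length_alternatingWord] at this
              omega
      omega
    obtain ⟨a, b, ha, hb', hab⟩ := alt_coeffs hg hij (t0+1) hbound
    have hw2 : w = f (t0+1) * cs.wordProd (CoxeterSystem.alternatingWord i j (t0+1)) := by
      simp [hf]
    have : ρ w (sroot i) = a • ρ (f (t0+1)) (sroot i) + b • ρ (f (t0+1)) (sroot j) := by
      rw [hw2, rho_mul_apply, hab, map_add, map_smul, map_smul]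
    rw [this]
    intro x
    simp only [Pi.add_apply, Pi.smul_apply, smul_eq_mul, Pi.zero_apply]
    have := Pi' x
    have := Pj' x
    simp only [Pi.zero_apply] at *
    nlinarith

lemma root_dichotomy (g : W) (i : I) : 0 ≤ ρ g (sroot i) ∨ ρ g (sroot i) ≤ 0 := by
  rcases cs.length_mul_simple g i with h | h
  · left
    exact rho_pos_of_ascent hg (cs.length g) g i rfl (by omega)
  · right
    have h2 : cs.length (g * cs.simple i) < cs.length ((g * cs.simple i) * cs.simple i) := by
      rw [cs.simple_mul_simple_cancel_right]
      omega
    have hpos := rho_pos_of_ascent hg (cs.length (g * cs.simple i)) (g * cs.simple i) i rfl h2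
    have heq : ρ g (sroot i) = - ρ (g * cs.simple i) (sroot i) := by
      conv_lhs => rw [show g = (g * cs.simple i) * cs.simple i from
        (cs.simple_mul_simple_cancel_right _).symm]
      rw [rho_mul_apply, simple_on_self hg, map_neg]
    rw [heq]
    exact neg_nonpos.2 hpos

end geom2
end BKBilliards

open BKBilliards

/-- If `β` is a transmitting root of `Str(Sep(u))` and `B(uβ, αᵢ) < 0`,
then `τᵢ(u) = sᵢ u`. -/
theorem toggle_of_form_neg
    {I : Type*} [Fintype I] [DecidableEq I] {M : CoxeterMatrix I} {W : Type*} [Group W]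
    (cs : CoxeterSystem M W) (ρ : Representation ℝ W (I → ℝ))
    (B : LinearMap.BilinForm ℝ (I → ℝ)) (hgeom : IsGeometric cs ρ B)
    (L : Set W) (hL : L.Nonempty) (hconv : IsConvex ρ L)
    (u : W) (i : I) (β : I → ℝ)
    (hβ : IsTransmitting ρ L (Sep ρ L u) β)
    (hB : B (ρ u β) (sroot i) < 0) :
    toggle ρ cs L i u = cs.simple i * u := by
  classical
  obtain ⟨hβRL, w, j, hSep, hβeq⟩ := hβ
  have hwβ : ρ w β = - sroot j := by
    rw [hβeq, map_neg, rho_inv_apply]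
  have hβSepw : β ∈ Sep ρ L w := ⟨hβRL, by rw [hwβ]; exact neg_nonpos.2 (sroot_nonneg j)⟩
  have hβSepu : β ∈ Sep ρ L u := hSep ▸ hβSepw
  have huβ : ρ u β ≤ 0 := hβSepu.2
  have hββ : B β β = 1 := by
    have h := B_inv hgeom w β β
    rw [hwβ] at h
    rw [← h]
    simp [B_diag hgeom j]
  suffices hnot : ρ u⁻¹ (sroot i) ∉ RL ρ L by
    simp only [toggle, if_neg hnot]
  intro hmem
  set γ : I → ℝ := ρ u⁻¹ (sroot i) with hγ
  have huγ : ρ u γ = sroot i := rho_inv_apply u _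
  set c : ℝ := - (2 * B (ρ u β) (sroot i)) with hc
  have hcpos : 0 < c := by rw [hc]; linarith
  set δ : I → ℝ := β + c • γ with hδ
  have huδ : ρ u δ = ρ u β + c • sroot i := by rw [hδ, map_add, map_smul, huγ]
  have hsiuβ : ρ (cs.simple i) (ρ u β) = ρ u β + c • sroot i := by
    rw [hgeom.simple_apply, hc, sub_eq_add_neg, ← neg_smul]
  obtain ⟨w', k0, hβPhi⟩ := hβRL.1
  have hinner : ρ u⁻¹ (ρ (cs.simple i) (ρ u (ρ w' (sroot k0)))) = δ := by
    rw [← hβPhi, hsiuβ, map_add, map_smul, rho_inv_apply', ← hγ, ← hδ]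
  have hδPhi : δ ∈ Phi ρ := by
    refine ⟨u⁻¹ * cs.simple i * u * w', k0, ?_⟩
    rw [rho_mul_apply, rho_mul_apply, rho_mul_apply, hinner]
  have hδRL : δ ∈ RL ρ L := by
    refine ⟨hδPhi, fun v hv => ?_⟩
    have h1 : (0 : I → ℝ) ≤ ρ v β := hβRL.2 v hv
    have h2 : (0 : I → ℝ) ≤ ρ v γ := hmem.2 v hv
    show (0 : I → ℝ) ≤ ρ v δ
    rw [hδ, map_add, map_smul]
    intro x
    have := h1 x
    have := h2 x
    simp only [Pi.zero_apply] at *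
    simp only [Pi.add_apply, Pi.smul_apply, smul_eq_mul]
    nlinarith
  have hγnotSepu : γ ∉ Sep ρ L u := by
    intro hcon
    have h := hcon.2
    rw [huγ] at h
    have := h i
    rw [sroot_self] at this
    simp at this
    linarith
  have huδroot : ρ u δ = ρ (cs.simple i * u * w') (sroot k0) := by
    rw [rho_mul_apply, rho_mul_apply, ← hβPhi, hsiuβ, huδ]
  rcases root_dichotomy hgeom (cs.simple i * u * w') k0 with hpos | hneg
  · -- Case B : 0 ≤ ρ u δ ; deduce ρ u β = -αᵢ, β = -γ, contradiction with hL
    rw [← huδroot, huδ] at hpos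
    have hcoords : ∀ x, x ≠ i → ρ u β x = 0 := by
      intro x hx
      have h1 := huβ x
      have h2 := hpos x
      simp only [Pi.zero_apply, Pi.add_apply, Pi.smul_apply, smul_eq_mul] at h1 h2 ⊢
      rw [sroot_ne hx] at h2
      simp at h1 h2 ⊢
      linarith
    have hval : ρ u β = (ρ u β i) • sroot i := by
      funext x
      rcases eq_or_ne x i with rfl | hx
      · simp [sroot_self]
      · simp [sroot_ne hx, hcoords x hx]
    have hnorm : B (ρ u β) (ρ u β) = 1 := by rw [B_inv hgeom, hββ]
    rw [hval] at hnorm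
    rw [LinearMap.BilinForm.smul_left, LinearMap.BilinForm.smul_right, B_diag hgeom] at hnorm
    have htle : ρ u β i ≤ 0 := by have := huβ i; simpa using this
    have ht : ρ u β i = -1 := by nlinarith
    have huβval : ρ u β = - sroot i := by
      rw [hval, ht]
      funext x
      simp
    have hβγ : β = - γ := by
      have : ρ u⁻¹ (ρ u β) = ρ u⁻¹ (- sroot i) := by rw [huβval]
      rw [rho_inv_apply', map_neg] at this
      rw [this, hγ]
    obtain ⟨v₀, hv₀⟩ := hL
    have h1 : (0 : I → ℝ) ≤ ρ v₀ β := hβRL.2 v₀ hv₀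
    have h2 : (0 : I → ℝ) ≤ ρ v₀ γ := hmem.2 v₀ hv₀
    have hzero : ρ v₀ β = 0 := by
      funext x
      have e1 := h1 x
      have e2 := h2 x
      have e3 : ρ v₀ β = - ρ v₀ γ := by rw [hβγ, map_neg]
      rw [e3] at e1 ⊢
      simp only [Pi.zero_apply, Pi.neg_apply] at *
      linarith
    have : B (ρ v₀ β) (ρ v₀ β) = 1 := by rw [B_inv hgeom, hββ]
    rw [hzero] at this
    simp at this
  · -- Case A : ρ u δ ≤ 0, so δ ∈ Sep u = Sep w, deduce ρ w γ = αⱼ and c = 2, contradiction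
    rw [← huδroot] at hneg
    have hδSepu : δ ∈ Sep ρ L u := ⟨hδRL, hneg⟩
    have hδSepw : δ ∈ Sep ρ L w := hSep.symm ▸ hδSepu
    have hwδ : ρ w δ = - sroot j + c • ρ w γ := by rw [hδ, map_add, map_smul, hwβ]
    have hwδneg : ρ w δ ≤ 0 := hδSepw.2
    have hwγroot : ρ w γ = ρ (w * u⁻¹) (sroot i) := by rw [rho_mul_apply]
    rcases root_dichotomy hgeom (w * u⁻¹) i with hpos2 | hneg2
    swap
    · refine absurd (hSep ▸ (⟨hmem, ?_⟩ : γ ∈ Sep ρ L w)) hγnotSepu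
      rw [hwγroot]; exact hneg2
    rw [← hwγroot] at hpos2
    have hcoords : ∀ x, x ≠ j → ρ w γ x = 0 := by
      intro x hx
      have h1 := hpos2 x
      have h2 := hwδneg x
      rw [hwδ] at h2
      simp only [Pi.zero_apply, Pi.add_apply, Pi.neg_apply, Pi.smul_apply, smul_eq_mul] at h1 h2 ⊢
      rw [sroot_ne hx] at h2
      simp at h1 h2 ⊢
      nlinarith
    have hval : ρ w γ = (ρ w γ j) • sroot j := by
      funext x
      rcases eq_or_ne x j with rfl | hx
      · simp [sroot_self]
      · simp [sroot_ne hx, hcoords x hx]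
    have hnorm : B (ρ w γ) (ρ w γ) = 1 := by
      rw [hwγroot, B_root_self hgeom]
    rw [hval, LinearMap.BilinForm.smul_left, LinearMap.BilinForm.smul_right,
      B_diag hgeom] at hnorm
    have htge : 0 ≤ ρ w γ j := by have := hpos2 j; simpa using this
    have ht : ρ w γ j = 1 := by nlinarith
    have hwγval : ρ w γ = sroot j := by rw [hval, ht, one_smul]
    have hBrel : B (ρ w β) (ρ w γ) = B (ρ u β) (sroot i) := by
      rw [B_inv hgeom, ← huγ, B_inv hgeom]
    rw [hwβ, hwγval] at hBrel
    have hBjj : B (- sroot (I := I) j) (sroot j) = -1 := by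
      rw [map_neg, LinearMap.neg_apply, B_diag hgeom]
    rw [hBjj] at hBrel
    have hc2 : c = 2 := by rw [hc, ← hBrel]; ring
    have := hwδneg j
    rw [hwδ] at this
    simp only [Pi.add_apply, Pi.neg_apply, Pi.smul_apply, Pi.zero_apply, smul_eq_mul] at this
    rw [sroot_self, hwγval, sroot_self, hc2] at this
    linarith
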